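/- (Weighted Dantzig selector rate) Fix A ∈ ℝ^{p×p}, c ∈ ℝ^p, weights w ∈ ℝ^p with w_j ≥ 0 and radii ρ ∈ ℝ^p with ρ_j ≥ 0; set θ_w(β) = Σ_j w_j|β_j| and Z_ρ = {z ∈ ℝ^p : |z_j| ≤ ρ_j for all j}, and F(β, z, u) = (−Aᵀu, u, Aβ − z − c). Suppose the sequence g^t = (β^t, z^t, u^t), with z^t ∈ Z_ρ for all t, satisfies: for every t and every g = (β, z, u) with z ∈ Z_ρ, θ_w(β) − θ_w(β^{t+1}) + ⟨g − g^{t+1}, F(g^{t+1})⟩ ≥ ⟨g − g^{t+1}, H(g^t − g^{t+1})⟩ for a symmetric positive definite matrix H; and suppose g* with z* ∈ Z_ρ satisfies θ_w(β) − θ_w(β*) + ⟨g − g*, F(g*)⟩ ≥ 0 for all g with z ∈ Z_ρ. Then for every integer T ≥ 0, ‖g^T − g^{T+1}‖_H² ≤ (1/(T+1)) · ‖g^0 − g*‖_H². -/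

import Mathlib

open Matrix

noncomputable section

/-- Vectors in ℝ^p. -/
abbrev Vec (p : ℕ) := Fin p → ℝ

/-- Triples `g = (β, z, u) ∈ ℝ^p × ℝ^p × ℝ^p`. -/
abbrev Trip (p : ℕ) := Vec p × Vec p × Vec p

/-- Index type for ℝ^{3p}. -/
abbrev Idx3 (p : ℕ) := Fin p ⊕ Fin p ⊕ Fin p

/-- Identify a triple `(β, z, u)` with a vector in ℝ^{3p}. -/
def toSum {p : ℕ} (g : Trip p) : Idx3 p → ℝ := Sum.elim g.1 (Sum.elim g.2.1 g.2.2)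

/-- The operator `F(β, z, u) = (−Aᵀu, u, Aβ − z − c)`. -/
def Fop {p : ℕ} (A : Matrix (Fin p) (Fin p) ℝ) (c : Vec p) (g : Trip p) : Trip p :=
  (-(Aᵀ *ᵥ g.2.2), g.2.2, A *ᵥ g.1 - g.2.1 - c)

/-- The weighted ℓ₁ functional `θ_w(β) = Σ_j w_j |β_j|`. -/
def thetaW {p : ℕ} (w : Vec p) (β : Vec p) : ℝ := ∑ j, w j * |β j|

/-- Membership in the box `Z_ρ = {z : |z_j| ≤ ρ_j for all j}`. -/
def inZρ {p : ℕ} (ρ : Vec p) (z : Vec p) : Prop := ∀ j, |z j| ≤ ρ j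

/-- The Euclidean inner product on ℝ^{3p}. -/
def ip {p : ℕ} (v w : Trip p) : ℝ := toSum v ⬝ᵥ toSum w

/-- The bilinear form `⟨v, H w⟩` on ℝ^{3p}; in particular `ipH H v v = ‖v‖_H²`. -/
def ipH {p : ℕ} (H : Matrix (Idx3 p) (Idx3 p) ℝ) (v w : Trip p) : ℝ :=
  toSum v ⬝ᵥ (H *ᵥ toSum w)

lemma toSum_sub {p : ℕ} (a b : Trip p) : toSum (a - b) = toSum a - toSum b := by
  funext x; cases x with
  | inl i => rfl
  | inr x => cases x with
    | inl i => rfl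
    | inr i => rfl

lemma toSum_add {p : ℕ} (a b : Trip p) : toSum (a + b) = toSum a + toSum b := by
  funext x; cases x with
  | inl i => rfl
  | inr x => cases x with
    | inl i => rfl
    | inr i => rfl

lemma ipH_sub_left {p : ℕ} (H : Matrix (Idx3 p) (Idx3 p) ℝ) (a b w : Trip p) :
    ipH H (a - b) w = ipH H a w - ipH H b w := by
  simp [ipH, toSum_sub, sub_dotProduct]

lemma ipH_sub_right {p : ℕ} (H : Matrix (Idx3 p) (Idx3 p) ℝ) (v a b : Trip p) :
    ipH H v (a - b) = ipH H v a - ipH H v b := by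
  simp [ipH, toSum_sub, Matrix.mulVec_sub, dotProduct_sub]

lemma ipH_add_left {p : ℕ} (H : Matrix (Idx3 p) (Idx3 p) ℝ) (a b w : Trip p) :
    ipH H (a + b) w = ipH H a w + ipH H b w := by
  simp [ipH, toSum_add, add_dotProduct]

lemma ipH_add_right {p : ℕ} (H : Matrix (Idx3 p) (Idx3 p) ℝ) (v a b : Trip p) :
    ipH H v (a + b) = ipH H v a + ipH H v b := by
  simp [ipH, toSum_add, Matrix.mulVec_add, dotProduct_add]

lemma ipH_comm {p : ℕ} (H : Matrix (Idx3 p) (Idx3 p) ℝ) (hs : Hᵀ = H) (v w : Trip p) :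
    ipH H v w = ipH H w v := by
  unfold ipH
  conv_lhs => rw [Matrix.dotProduct_mulVec, ← hs, Matrix.vecMul_transpose]
  exact dotProduct_comm _ _

lemma ipH_swap {p : ℕ} (H : Matrix (Idx3 p) (Idx3 p) ℝ) (a b w : Trip p) :
    ipH H (a - b) w = -ipH H (b - a) w := by
  rw [ipH_sub_left, ipH_sub_left]; ring

lemma ip_swap {p : ℕ} (a b w : Trip p) :
    ip (a - b) w = -ip (b - a) w := by
  simp only [ip, toSum_sub, sub_dotProduct]; ring

lemma ipH_self_nonneg {p : ℕ} (H : Matrix (Idx3 p) (Idx3 p) ℝ) (hH : H.PosDef)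
    (v : Trip p) : 0 ≤ ipH H v v := by
  have := hH.posSemidef.dotProduct_mulVec_nonneg (toSum v)
  simpa [ipH] using this

lemma ip_skew {p : ℕ} (A : Matrix (Fin p) (Fin p) ℝ) (c : Vec p) (a b : Trip p) :
    ip (a - b) (Fop A c a) + ip (b - a) (Fop A c b) = 0 := by
  have hd : ∀ v w : Trip p, ip v w = v.1 ⬝ᵥ w.1 + v.2.1 ⬝ᵥ w.2.1 + v.2.2 ⬝ᵥ w.2.2 := by
    intro v w
    simp [ip, toSum, dotProduct, Fintype.sum_sum_type]
    ring
  have key : ∀ x y : Vec p, x ⬝ᵥ (Aᵀ *ᵥ y) = (A *ᵥ x) ⬝ᵥ y := by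
    intro x y
    rw [Matrix.dotProduct_mulVec, Matrix.vecMul_transpose]
  simp only [hd, Fop]
  show (a.1 - b.1) ⬝ᵥ (-(Aᵀ *ᵥ a.2.2)) + (a.2.1 - b.2.1) ⬝ᵥ a.2.2 +
      (a.2.2 - b.2.2) ⬝ᵥ (A *ᵥ a.1 - a.2.1 - c) +
      ((b.1 - a.1) ⬝ᵥ (-(Aᵀ *ᵥ b.2.2)) + (b.2.1 - a.2.1) ⬝ᵥ b.2.2 +
      (b.2.2 - a.2.2) ⬝ᵥ (A *ᵥ b.1 - b.2.1 - c)) = 0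
  simp only [sub_dotProduct, dotProduct_sub, dotProduct_neg, key,
    Matrix.mulVec_sub, Matrix.mulVec_add, Matrix.mulVec_neg, dotProduct_add]
  rw [dotProduct_comm a.2.2 (A *ᵥ a.1), dotProduct_comm b.2.2 (A *ᵥ b.1),
    dotProduct_comm a.2.2 a.2.1, dotProduct_comm b.2.2 b.2.1,
    dotProduct_comm a.2.2 b.2.1, dotProduct_comm b.2.2 a.2.1,
    dotProduct_comm b.2.2 (A *ᵥ a.1), dotProduct_comm a.2.2 (A *ᵥ b.1)]
  ring

/-- Weighted Dantzig selector O(1/T) rate: if the sequence `g^t` (with `z^t ∈ Z_ρ`)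
satisfies the weighted PPA variational inequality with symmetric positive definite `H`
and `g*` is a weighted saddle point, then for every `T ≥ 0`,
`‖g^T − g^{T+1}‖_H² ≤ (1/(T+1)) ‖g^0 − g*‖_H²`. -/
theorem stmt18 {p : ℕ} (A : Matrix (Fin p) (Fin p) ℝ) (c : Vec p)
    (w ρ : Vec p) (hw : ∀ j, 0 ≤ w j) (hρ : ∀ j, 0 ≤ ρ j)
    (H : Matrix (Idx3 p) (Idx3 p) ℝ) (hH : H.PosDef)
    (g : ℕ → Trip p) (hz : ∀ t, inZρ ρ (g t).2.1)
    (hPVI : ∀ t : ℕ, ∀ gg : Trip p, inZρ ρ gg.2.1 →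
      ipH H (gg - g (t + 1)) (g t - g (t + 1)) ≤
        thetaW w gg.1 - thetaW w (g (t + 1)).1 +
          ip (gg - g (t + 1)) (Fop A c (g (t + 1))))
    (gs : Trip p) (hzs : inZρ ρ gs.2.1)
    (hgs : ∀ gg : Trip p, inZρ ρ gg.2.1 →
      0 ≤ thetaW w gg.1 - thetaW w gs.1 + ip (gg - gs) (Fop A c gs)) :
    ∀ T : ℕ, ipH H (g T - g (T + 1)) (g T - g (T + 1)) ≤
      (1 / (T + 1 : ℝ)) * ipH H (g 0 - gs) (g 0 - gs) := by
  have hs : Hᵀ = H := by simpa using hH.1.eq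
  set d : ℕ → Trip p := fun t => g t - g (t + 1) with hd
  set D : ℕ → ℝ := fun t => ipH H (d t) (d t) with hD
  set a : ℕ → ℝ := fun t => ipH H (g t - gs) (g t - gs) with ha
  -- Step B : 0 ≤ ⟨g_{t+1} - g*, H d_t⟩
  have h1 : ∀ t, 0 ≤ ipH H (g (t + 1) - gs) (d t) := by
    intro t
    have e1 := hPVI t gs hzs
    have e2 := hgs (g (t + 1)) (hz (t + 1))
    have e3 := ip_skew A c (g (t + 1)) gs
    have e4 := ip_swap gs (g (t + 1)) (Fop A c (g (t + 1)))
    have e5 := ipH_swap H gs (g (t + 1)) (d t)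
    have e6 := ip_swap (g (t + 1)) gs (Fop A c gs)
    simp only [hd] at *
    linarith
  -- Step C : D t ≤ a t - a (t+1)
  have key1 : ∀ t, D t ≤ a t - a (t + 1) := by
    intro t
    have hid : g t - gs = (g (t + 1) - gs) + d t := by simp only [hd]; abel
    have expand : a t = a (t + 1) + 2 * ipH H (g (t + 1) - gs) (d t) + D t := by
      simp only [ha, hD, hid, ipH_add_left, ipH_add_right]
      rw [ipH_comm H hs (d t) (g (t + 1) - gs)]
      ring
    have := h1 t
    linarith
  -- Step D : D (t+1) ≤ D t
  have h2 : ∀ t, ipH H (d (t + 1)) (d (t + 1)) ≤ ipH H (d (t + 1)) (d t) := by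
    intro t
    have e1 := hPVI t (g (t + 2)) (hz (t + 2))
    have e2 := hPVI (t + 1) (g (t + 1)) (hz (t + 1))
    have e3 := ip_skew A c (g (t + 2)) (g (t + 1))
    have e4 := ip_swap (g (t + 2)) (g (t + 1)) (Fop A c (g (t + 1)))
    have e5 := ipH_swap H (g (t + 2)) (g (t + 1)) (d t)
    have e6 := ip_swap (g (t + 2)) (g (t + 1)) (Fop A c (g (t + 2)))
    simp only [hd, show t + 1 + 1 = t + 2 from rfl] at *
    linarith
  have hmono1 : ∀ t, D (t + 1) ≤ D t := by
    intro t
    have hid : d t = d (t + 1) + (d t - d (t + 1)) := by abel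
    have expand : D t = D (t + 1) + 2 * ipH H (d (t + 1)) (d t - d (t + 1)) +
        ipH H (d t - d (t + 1)) (d t - d (t + 1)) := by
      simp only [hD]
      conv_lhs => rw [hid]
      simp only [ipH_add_left, ipH_add_right]
      rw [ipH_comm H hs (d t - d (t + 1)) (d (t + 1))]
      ring
    have h3 : 0 ≤ ipH H (d (t + 1)) (d t - d (t + 1)) := by
      rw [ipH_sub_right]; linarith [h2 t]
    have h4 := ipH_self_nonneg H hH (d t - d (t + 1))
    linarith
  have hmono : ∀ s t : ℕ, s ≤ t → D t ≤ D s :=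
    fun s t hst => antitone_nat_of_succ_le hmono1 hst
  intro T
  have hpos : (0 : ℝ) < (T : ℝ) + 1 := by positivity
  -- sum bound
  have hsum1 : ∑ t ∈ Finset.range (T + 1), D t ≤ a 0 := by
    have htel : ∑ t ∈ Finset.range (T + 1), (a t - a (t + 1)) = a 0 - a (T + 1) :=
      Finset.sum_range_sub' a (T + 1)
    have hle : ∑ t ∈ Finset.range (T + 1), D t ≤
        ∑ t ∈ Finset.range (T + 1), (a t - a (t + 1)) :=
      Finset.sum_le_sum fun t _ => key1 t
    have hnn : 0 ≤ a (T + 1) := ipH_self_nonneg H hH _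
    linarith
  have hsum2 : ((T : ℝ) + 1) * D T ≤ ∑ t ∈ Finset.range (T + 1), D t := by
    have : ∑ t ∈ Finset.range (T + 1), D T ≤ ∑ t ∈ Finset.range (T + 1), D t :=
      Finset.sum_le_sum fun t ht => hmono t T (Nat.lt_succ_iff.mp (Finset.mem_range.mp ht))
    simpa [Finset.sum_const, Finset.card_range, nsmul_eq_mul, add_mul] using this
  have hfin : ((T : ℝ) + 1) * D T ≤ a 0 := le_trans hsum2 hsum1
  have : D T ≤ a 0 / ((T : ℝ) + 1) := by
    rw [le_div_iff₀ hpos]; linarith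
  calc ipH H (g T - g (T + 1)) (g T - g (T + 1)) = D T := rfl
    _ ≤ a 0 / ((T : ℝ) + 1) := this
    _ = (1 / ((T : ℝ) + 1)) * a 0 := by ring
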